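/- Let A₁', B₁', C₁' be an overlapping Napoleon configuration for a nondegenerate triangle ABC in the Euclidean plane, and let A₂', B₂', C₂' be the midpoints of B₁'C₁', C₁'A₁', A₁'B₁' respectively. Let A** = (A+B₂'+C₂')/3, B** = (A₂'+B+C₂')/3 and C** = (A₂'+B₂'+C)/3 be the centroids of the equilateral triangles AB₂'C₂', A₂'BC₂' and A₂'B₂'C. Then the triangle A**B**C** is equilateral and its centroid (A**+B**+C**)/3 equals the centroid G = (A+B+C)/3 of triangle ABC. -/

import Mathlib

open EuclideanGeometry AffineSubspace MeasureTheory

theorem napoleon_apex_core (b0 b1 c0 c1 p0 p1 S k n f : ℝ)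
    (hndef : n = (c0-b0)^2+(c1-b1)^2)
    (hfdef : f = (c0-b0)*(p1-b1)-(c1-b1)*(p0-b0))
    (h1 : (p0-b0)^2+(p1-b1)^2 = n)
    (h2 : (p0-c0)^2+(p1-c1)^2 = n)
    (hn : 0 < n)
    (hS : S ≠ 0)
    (hside : 0 ≤ f * S)
    (hk : k = (if 0 < S then 1 else -1) * (Real.sqrt 3 / 2)) :
    p0 = (b0+c0)/2 - k*(c1-b1) ∧ p1 = (b1+c1)/2 + k*(c0-b0) := by
  have hn' : n ≠ 0 := ne_of_gt hn
  have hlin : (c0-b0)*(p0-(b0+c0)/2) + (c1-b1)*(p1-(b1+c1)/2) = 0 := by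
    linear_combination (h1 - h2)/2
  have e0 : n * (p0-(b0+c0)/2) = -f*(c1-b1) := by
    linear_combination (c0-b0)*hlin + (p0-(b0+c0)/2)*hndef + (c1-b1)*hfdef
  have e1 : n * (p1-(b1+c1)/2) = f*(c0-b0) := by
    linear_combination (c1-b1)*hlin + (p1-(b1+c1)/2)*hndef - (c0-b0)*hfdef
  have key : f^2 * n = 3/4 * n^3 := by
    linear_combination (n^2)*h1 -
      (n*(p0-(b0+c0)/2) - f*(c1-b1) + n*(c0-b0))*e0 -
      (n*(p1-(b1+c1)/2) + f*(c0-b0) + n*(c1-b1))*e1 +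
      (f^2 + n^2/4)*hndef
  have hf2 : f^2 = 3/4 * n^2 :=
    mul_right_cancel₀ hn' (by linear_combination key)
  have hf0 : f ≠ 0 := by
    intro h; rw [h] at hf2; nlinarith
  have hfS : 0 < f * S := lt_of_le_of_ne hside (Ne.symm (mul_ne_zero hf0 hS))
  have h3 : Real.sqrt 3 ^ 2 = 3 := Real.sq_sqrt (by norm_num)
  have hr : 0 < Real.sqrt 3 := Real.sqrt_pos.mpr (by norm_num)
  have hfact : (f - Real.sqrt 3/2*n) * (f + Real.sqrt 3/2*n) = 0 := by
    linear_combination hf2 - (n^2/4)*h3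
  have hfk : f = k * n := by
    rcases mul_eq_zero.mp hfact with hc | hc
    · rw [hk]; split_ifs with hs
      · linear_combination hc
      · exfalso
        have hSneg : S < 0 := lt_of_le_of_ne (le_of_not_gt hs) hS
        have hfpos : 0 < f := by linarith [mul_pos hr hn]
        linarith [mul_neg_of_pos_of_neg hfpos hSneg]
    · rw [hk]; split_ifs with hs
      · exfalso
        have hfneg : f < 0 := by linarith [mul_pos hr hn]
        linarith [mul_neg_of_neg_of_pos hfneg hs]
      · linear_combination hc
  constructor
  · have hz : n * (p0 - ((b0+c0)/2 - k*(c1-b1))) = 0 := by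
      linear_combination e0 - (c1-b1)*hfk
    rcases mul_eq_zero.mp hz with h | h
    · exact absurd h hn'
    · linarith
  · have hz : n * (p1 - ((b1+c1)/2 + k*(c0-b0))) = 0 := by
      linear_combination e1 + (c0-b0)*hfk
    rcases mul_eq_zero.mp hz with h | h
    · exact absurd h hn'
    · linarith

theorem napoleon_line_coord {X Y p : EuclideanSpace ℝ (Fin 2)}
    (hp : p ∈ affineSpan ℝ {X, Y}) :
    ∃ r : ℝ, p 0 = X 0 + r * (Y 0 - X 0) ∧ p 1 = X 1 + r * (Y 1 - X 1) := by
  have hd := AffineSubspace.vsub_mem_direction hp (left_mem_affineSpan_pair ℝ X Y)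
  rw [direction_affineSpan, mem_vectorSpan_pair_rev] at hd
  obtain ⟨r, hr⟩ := hd
  refine ⟨r, ?_, ?_⟩
  · have := congrArg (fun v => v 0) hr
    simp only [PiLp.smul_apply, PiLp.sub_apply, smul_eq_mul] at this
    simp only [vsub_eq_sub, PiLp.sub_apply] at this ⊢
    linarith [this]
  · have := congrArg (fun v => v 1) hr
    simp only [PiLp.smul_apply, PiLp.sub_apply, smul_eq_mul] at this
    simp only [vsub_eq_sub, PiLp.sub_apply] at this ⊢
    linarith [this]

theorem napoleon_side_sign (P Q X Y : EuclideanSpace ℝ (Fin 2))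
    (h : (affineSpan ℝ {X, Y}).WSameSide P Q) :
    0 ≤ ((Y 0 - X 0)*(P 1 - X 1)-(Y 1 - X 1)*(P 0 - X 0)) *
        ((Y 0 - X 0)*(Q 1 - X 1)-(Y 1 - X 1)*(Q 0 - X 0)) := by
  obtain ⟨p₁, hp₁, p₂, hp₂, hray⟩ := h
  obtain ⟨r₁, hp10, hp11⟩ := napoleon_line_coord hp₁
  obtain ⟨r₂, hp20, hp21⟩ := napoleon_line_coord hp₂
  rcases hray with h0 | h0 | ⟨u, v, hu, hv, huv⟩
  · have hP : P = p₁ := by rwa [vsub_eq_zero_iff_eq] at h0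
    have hz : ((Y 0 - X 0)*(P 1 - X 1)-(Y 1 - X 1)*(P 0 - X 0)) = 0 := by
      rw [hP, hp10, hp11]; ring
    rw [hz]; simp
  · have hQ : Q = p₂ := by rwa [vsub_eq_zero_iff_eq] at h0
    have hz : ((Y 0 - X 0)*(Q 1 - X 1)-(Y 1 - X 1)*(Q 0 - X 0)) = 0 := by
      rw [hQ, hp20, hp21]; ring
    rw [hz]; simp
  · have e0 : u * (P 0 - p₁ 0) = v * (Q 0 - p₂ 0) := by
      have := congrArg (fun v => v 0) huv
      simpa [PiLp.smul_apply, PiLp.sub_apply, smul_eq_mul, vsub_eq_sub] using this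
    have e1 : u * (P 1 - p₁ 1) = v * (Q 1 - p₂ 1) := by
      have := congrArg (fun v => v 1) huv
      simpa [PiLp.smul_apply, PiLp.sub_apply, smul_eq_mul, vsub_eq_sub] using this
    have key : u * ((Y 0 - X 0)*(P 1 - X 1)-(Y 1 - X 1)*(P 0 - X 0))
        = v * ((Y 0 - X 0)*(Q 1 - X 1)-(Y 1 - X 1)*(Q 0 - X 0)) := by
      linear_combination (Y 0 - X 0) * e1 - (Y 1 - X 1) * e0 +
        (u*(Y 0 - X 0))*hp11 - (u*(Y 1 - X 1))*hp10 -
        (v*(Y 0 - X 0))*hp21 + (v*(Y 1 - X 1))*hp20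
    have h2 : u * (((Y 0 - X 0)*(P 1 - X 1)-(Y 1 - X 1)*(P 0 - X 0)) *
        ((Y 0 - X 0)*(Q 1 - X 1)-(Y 1 - X 1)*(Q 0 - X 0)))
        = v * ((Y 0 - X 0)*(Q 1 - X 1)-(Y 1 - X 1)*(Q 0 - X 0))^2 := by
      linear_combination ((Y 0 - X 0)*(Q 1 - X 1)-(Y 1 - X 1)*(Q 0 - X 0)) * key
    have h3 : 0 ≤ v * ((Y 0 - X 0)*(Q 1 - X 1)-(Y 1 - X 1)*(Q 0 - X 0))^2 := by positivity
    have hgen : ∀ a b w : ℝ, 0 < u → u * (a*b) = w → 0 ≤ w → 0 ≤ a*b := by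
      intro a b w hu' h1' h2'
      nlinarith
    exact hgen _ _ _ hu h2 h3

theorem napoleon_mem_of_det_zero (X Y Q : EuclideanSpace ℝ (Fin 2))
    (hn : 0 < (Y 0 - X 0)^2 + (Y 1 - X 1)^2)
    (h0 : (Y 0 - X 0)*(Q 1 - X 1)-(Y 1 - X 1)*(Q 0 - X 0) = 0) :
    Q ∈ affineSpan ℝ {X, Y} := by
  set r : ℝ := ((Y 0 - X 0)*(Q 0 - X 0)+(Y 1 - X 1)*(Q 1 - X 1)) / ((Y 0 - X 0)^2 + (Y 1 - X 1)^2) with hr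
  have hne := ne_of_gt hn
  have hQ : AffineMap.lineMap X Y r = Q := by
    ext i
    fin_cases i
    · show (AffineMap.lineMap X Y r) 0 = Q 0
      have : (AffineMap.lineMap X Y r) 0 = X 0 + r * (Y 0 - X 0) := by
        simp [AffineMap.lineMap_apply]; ring
      rw [this, hr]
      field_simp
      linear_combination (Y 1 - X 1) * h0
    · show (AffineMap.lineMap X Y r) 1 = Q 1
      have : (AffineMap.lineMap X Y r) 1 = X 1 + r * (Y 1 - X 1) := by
        simp [AffineMap.lineMap_apply]; ring
      rw [this, hr]
      field_simp
      linear_combination -(Y 0 - X 0) * h0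
  rw [← hQ]
  exact AffineMap.lineMap_mem_affineSpan_pair r X Y


theorem napoleon_dsq (X Y : EuclideanSpace ℝ (Fin 2)) :
    dist X Y = Real.sqrt ((X 0 - Y 0)^2 + (X 1 - Y 1)^2) := by
  rw [EuclideanSpace.dist_eq]
  congr 1
  simp [Fin.sum_univ_two, Real.dist_eq, sq_abs]

theorem napoleon_pos_of_ne (X Y : EuclideanSpace ℝ (Fin 2)) (h : X ≠ Y) :
    0 < (Y 0 - X 0)^2 + (Y 1 - X 1)^2 := by
  rcases lt_or_eq_of_le (by positivity : (0:ℝ) ≤ (Y 0 - X 0)^2 + (Y 1 - X 1)^2) with hl | he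
  · exact hl
  · exfalso; apply h; ext i
    have h0 : Y 0 - X 0 = 0 := by nlinarith [sq_nonneg (Y 0 - X 0), sq_nonneg (Y 1 - X 1)]
    have h1 : Y 1 - X 1 = 0 := by nlinarith [sq_nonneg (Y 0 - X 0), sq_nonneg (Y 1 - X 1)]
    fin_cases i
    · show X 0 = Y 0; linarith
    · show X 1 = Y 1; linarith

theorem napoleon_distsq_eq {X Y Z W : EuclideanSpace ℝ (Fin 2)} (h : dist X Y = dist Z W) :
    (X 0 - Y 0)^2 + (X 1 - Y 1)^2 = (Z 0 - W 0)^2 + (Z 1 - W 1)^2 := by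
  rw [napoleon_dsq, napoleon_dsq] at h
  have := congrArg (fun x => x^2) h
  simpa [Real.sq_sqrt, (by positivity : (0:ℝ) ≤ (X 0 - Y 0)^2 + (X 1 - Y 1)^2),
    Real.sq_sqrt (by positivity : (0:ℝ) ≤ (Z 0 - W 0)^2 + (Z 1 - W 1)^2)] using this

theorem napoleon_doublestar_triangle
    (A B C A₁' B₁' C₁' : EuclideanSpace ℝ (Fin 2))
    (hABC : AffineIndependent ℝ ![A, B, C])
    (hA₁' : dist A₁' B = dist B C) (hA₁'2 : dist A₁' C = dist B C)
    (hB₁' : dist A B₁' = dist A C) (hB₁'2 : dist B₁' C = dist A C)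
    (hC₁' : dist A C₁' = dist A B) (hC₁'2 : dist B C₁' = dist A B)
    (hsideA' : (affineSpan ℝ {B, C}).SSameSide A₁' A)
    (hsideB' : (affineSpan ℝ {C, A}).SSameSide B₁' B)
    (hsideC' : (affineSpan ℝ {A, B}).SSameSide C₁' C)
    (A₂' B₂' C₂' Ass Bss Css : EuclideanSpace ℝ (Fin 2))
    (hA₂' : A₂' = (2:ℝ)⁻¹ • (B₁' + C₁'))
    (hB₂' : B₂' = (2:ℝ)⁻¹ • (C₁' + A₁'))
    (hC₂' : C₂' = (2:ℝ)⁻¹ • (A₁' + B₁'))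
    (hAss : Ass = (3:ℝ)⁻¹ • (A + B₂' + C₂'))
    (hBss : Bss = (3:ℝ)⁻¹ • (A₂' + B + C₂'))
    (hCss : Css = (3:ℝ)⁻¹ • (A₂' + B₂' + C)) :
    (dist Ass Bss = dist Bss Css ∧ dist Bss Css = dist Css Ass) ∧
      (3:ℝ)⁻¹ • (Ass + Bss + Css) = (3:ℝ)⁻¹ • (A + B + C) := by
  -- distinctness of vertices
  have hBC : B ≠ C := by
    have := hABC.injective.ne (show (1 : Fin 3) ≠ 2 by decide)
    simpa using this
  have hCA : C ≠ A := by
    have := hABC.injective.ne (show (2 : Fin 3) ≠ 0 by decide)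
    simpa using this
  have hAB : A ≠ B := by
    have := hABC.injective.ne (show (0 : Fin 3) ≠ 1 by decide)
    simpa using this
  have hnA : 0 < (C 0 - B 0)^2 + (C 1 - B 1)^2 := napoleon_pos_of_ne B C hBC
  have hnB : 0 < (A 0 - C 0)^2 + (A 1 - C 1)^2 := napoleon_pos_of_ne C A hCA
  have hnC : 0 < (B 0 - A 0)^2 + (B 1 - A 1)^2 := napoleon_pos_of_ne A B hAB
  -- the signed area S (for line BC versus point A)
  have hS : ((C 0 - B 0)*(A 1 - B 1)-(C 1 - B 1)*(A 0 - B 0)) ≠ 0 := by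
    intro h0
    exact hsideA'.2.2 (napoleon_mem_of_det_zero B C A hnA h0)
  obtain ⟨k, hk⟩ : ∃ k : ℝ, k = (if 0 < ((C 0 - B 0)*(A 1 - B 1)-(C 1 - B 1)*(A 0 - B 0)) then 1 else -1) * (Real.sqrt 3 / 2) := ⟨_, rfl⟩
  have hk2 : k^2 = 3/4 := by
    have h3 : Real.sqrt 3 ^ 2 = 3 := Real.sq_sqrt (by norm_num)
    rw [hk]; split_ifs
    · linear_combination h3/4
    · linear_combination h3/4
  -- apex A₁'
  obtain ⟨fA0, fA1⟩ := napoleon_apex_core (B 0) (B 1) (C 0) (C 1) (A₁' 0) (A₁' 1)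
    ((C 0 - B 0)*(A 1 - B 1)-(C 1 - B 1)*(A 0 - B 0)) k _ _ rfl rfl
    (by linear_combination napoleon_distsq_eq hA₁') (by linear_combination napoleon_distsq_eq hA₁'2)
    hnA hS (napoleon_side_sign A₁' A B C hsideA'.1) hk
  -- apex B₁'
  have hSB : ((A 0 - C 0)*(B 1 - C 1)-(A 1 - C 1)*(B 0 - C 0))
      = ((C 0 - B 0)*(A 1 - B 1)-(C 1 - B 1)*(A 0 - B 0)) := by ring
  obtain ⟨fB0, fB1⟩ := napoleon_apex_core (C 0) (C 1) (A 0) (A 1) (B₁' 0) (B₁' 1)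
    ((A 0 - C 0)*(B 1 - C 1)-(A 1 - C 1)*(B 0 - C 0)) k _ _ rfl rfl
    (by linear_combination napoleon_distsq_eq hB₁'2) (by linear_combination napoleon_distsq_eq hB₁')
    hnB (by rw [hSB]; exact hS) (napoleon_side_sign B₁' B C A hsideB'.1) (by rw [hSB]; exact hk)
  -- apex C₁'
  have hSC : ((B 0 - A 0)*(C 1 - A 1)-(B 1 - A 1)*(C 0 - A 0))
      = ((C 0 - B 0)*(A 1 - B 1)-(C 1 - B 1)*(A 0 - B 0)) := by ring
  obtain ⟨fC0, fC1⟩ := napoleon_apex_core (A 0) (A 1) (B 0) (B 1) (C₁' 0) (C₁' 1)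
    ((B 0 - A 0)*(C 1 - A 1)-(B 1 - A 1)*(C 0 - A 0)) k _ _ rfl rfl
    (by linear_combination napoleon_distsq_eq hC₁') (by linear_combination napoleon_distsq_eq hC₁'2)
    hnC (by rw [hSC]; exact hS) (napoleon_side_sign C₁' C A B hsideC'.1) (by rw [hSC]; exact hk)
  -- coordinates of midpoints and centroids
  have cA2 : ∀ i : Fin 2, A₂' i = (B₁' i + C₁' i)/2 := by
    intro i; rw [hA₂']; simp [PiLp.smul_apply, PiLp.add_apply]; ring
  have cB2 : ∀ i : Fin 2, B₂' i = (C₁' i + A₁' i)/2 := by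
    intro i; rw [hB₂']; simp [PiLp.smul_apply, PiLp.add_apply]; ring
  have cC2 : ∀ i : Fin 2, C₂' i = (A₁' i + B₁' i)/2 := by
    intro i; rw [hC₂']; simp [PiLp.smul_apply, PiLp.add_apply]; ring
  have cAs : ∀ i : Fin 2, Ass i = (A i + B₂' i + C₂' i)/3 := by
    intro i; rw [hAss]; simp [PiLp.smul_apply, PiLp.add_apply]; ring
  have cBs : ∀ i : Fin 2, Bss i = (A₂' i + B i + C₂' i)/3 := by
    intro i; rw [hBss]; simp [PiLp.smul_apply, PiLp.add_apply]; ring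
  have cCs : ∀ i : Fin 2, Css i = (A₂' i + B₂' i + C i)/3 := by
    intro i; rw [hCss]; simp [PiLp.smul_apply, PiLp.add_apply]; ring
  -- explicit coordinates
  have EAss0 : Ass 0 = (-1/6:ℝ)*C 1*k + (1/4:ℝ)*C 0 + (1/6:ℝ)*B 1*k + (1/4:ℝ)*B 0 + (1/2:ℝ)*A 0 := by
    rw [cAs 0, cB2 0, cC2 0, fA0, fB0, fC0]; ring
  have EAss1 : Ass 1 = (1/4:ℝ)*C 1 + (1/6:ℝ)*C 0*k + (1/4:ℝ)*B 1 - (1/6:ℝ)*B 0*k + (1/2:ℝ)*A 1 := by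
    rw [cAs 1, cB2 1, cC2 1, fA1, fB1, fC1]; ring
  have EBss0 : Bss 0 = (1/6:ℝ)*C 1*k + (1/4:ℝ)*C 0 + (1/2:ℝ)*B 0 - (1/6:ℝ)*A 1*k + (1/4:ℝ)*A 0 := by
    rw [cBs 0, cA2 0, cC2 0, fA0, fB0, fC0]; ring
  have EBss1 : Bss 1 = (1/4:ℝ)*C 1 - (1/6:ℝ)*C 0*k + (1/2:ℝ)*B 1 + (1/4:ℝ)*A 1 + (1/6:ℝ)*A 0*k := by
    rw [cBs 1, cA2 1, cC2 1, fA1, fB1, fC1]; ring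
  have ECss0 : Css 0 = (1/2:ℝ)*C 0 - (1/6:ℝ)*B 1*k + (1/4:ℝ)*B 0 + (1/6:ℝ)*A 1*k + (1/4:ℝ)*A 0 := by
    rw [cCs 0, cA2 0, cB2 0, fA0, fB0, fC0]; ring
  have ECss1 : Css 1 = (1/2:ℝ)*C 1 + (1/4:ℝ)*B 1 + (1/6:ℝ)*B 0*k + (1/4:ℝ)*A 1 - (1/6:ℝ)*A 0*k := by
    rw [cCs 1, cA2 1, cB2 1, fA1, fB1, fC1]; ring
  refine ⟨⟨?_, ?_⟩, ?_⟩
  · rw [napoleon_dsq Ass Bss, napoleon_dsq Bss Css]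
    congr 1
    rw [EAss0, EAss1, EBss0, EBss1, ECss0, ECss1]
    linear_combination ((1/12:ℝ)*C 1*C 1 + (1/12:ℝ)*C 0*C 0 - (1/6:ℝ)*B 1*C 1 - (1/6:ℝ)*B 0*C 0 + (1/6:ℝ)*A 1*B 1 - (1/12:ℝ)*A 1*A 1 + (1/6:ℝ)*A 0*B 0 - (1/12:ℝ)*A 0*A 0) * hk2
  · rw [napoleon_dsq Bss Css, napoleon_dsq Css Ass]
    congr 1
    rw [EAss0, EAss1, EBss0, EBss1, ECss0, ECss1]
    linear_combination ((1/6:ℝ)*B 1*C 1 - (1/12:ℝ)*B 1*B 1 + (1/6:ℝ)*B 0*C 0 - (1/12:ℝ)*B 0*B 0 - (1/6:ℝ)*A 1*C 1 + (1/12:ℝ)*A 1*A 1 - (1/6:ℝ)*A 0*C 0 + (1/12:ℝ)*A 0*A 0) * hk2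
  · have s0 : Ass 0 + Bss 0 + Css 0 = A 0 + B 0 + C 0 := by
      rw [EAss0, EBss0, ECss0]; ring
    have s1 : Ass 1 + Bss 1 + Css 1 = A 1 + B 1 + C 1 := by
      rw [EAss1, EBss1, ECss1]; ring
    ext i
    fin_cases i
    · show ((3:ℝ)⁻¹ • (Ass + Bss + Css)) 0 = ((3:ℝ)⁻¹ • (A + B + C)) 0
      simp only [PiLp.smul_apply, PiLp.add_apply, smul_eq_mul]
      rw [s0]
    · show ((3:ℝ)⁻¹ • (Ass + Bss + Css)) 1 = ((3:ℝ)⁻¹ • (A + B + C)) 1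
      simp only [PiLp.smul_apply, PiLp.add_apply, smul_eq_mul]
      rw [s1]
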